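/- For a > 0, the function φ(z) = (-log |z|²)^{-a} on the disk {|z| ≤ 1/2}, extended by φ(0) = 0, is continuous and satisfies the modulus of continuity estimate |φ(z) - φ(w)| ≤ C/|log |z - w||^a for all z, w with |z|, |w| ≤ 1/4 and z ≠ w, for some constant C depending only on a. However, φ is not Hölder continuous: for every β ∈ (0,1) and every C > 0 there exist z, w in the disk with |φ(z) - φ(w)| > C|z-w|^β. -/

import Mathlib

open Real Filter Topology

set_option maxHeartbeats 1000000

lemma aux_key (a : ℝ) (ha : 0 < a) {x y : ℝ} (hx : 1 ≤ x) (hxy : x ≤ y) :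
    x ^ (-a) - y ^ (-a) ≤ a * (y - x) := by
  have hx0 : 0 < x := by linarith
  have hy0 : 0 < y := by linarith
  have hq : 0 < x / y := div_pos hx0 hy0
  have h1 : 1 + a * Real.log (x / y) ≤ (x / y) ^ a := by
    calc 1 + a * Real.log (x / y) = a * Real.log (x/y) + 1 := by ring
    _ ≤ Real.exp (a * Real.log (x/y)) := Real.add_one_le_exp _
    _ = (x / y) ^ a := by rw [← Real.log_rpow hq, Real.exp_log (Real.rpow_pos_of_pos hq a)]
  have hlog : Real.log (x / y) = Real.log x - Real.log y := Real.log_div (ne_of_gt hx0) (ne_of_gt hy0)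
  have hlyx : Real.log y - Real.log x ≤ y / x - 1 := by
    have := Real.log_le_sub_one_of_pos (show (0:ℝ) < y / x from div_pos hy0 hx0)
    rwa [Real.log_div (ne_of_gt hy0) (ne_of_gt hx0)] at this
  have hsplit : y ^ (-a) = x ^ (-a) * (x / y) ^ a := by
    rw [Real.div_rpow (le_of_lt hx0) (le_of_lt hy0), Real.rpow_neg (le_of_lt hx0),
      Real.rpow_neg (le_of_lt hy0)]
    field_simp
  have hxa : x ^ (-a) ≤ 1 := Real.rpow_le_one_of_one_le_of_nonpos hx (by linarith)
  have hxa0 : 0 < x ^ (-a) := Real.rpow_pos_of_pos hx0 _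
  have step1 : x ^ (-a) - y ^ (-a) ≤ x ^ (-a) * (a * (Real.log y - Real.log x)) := by
    rw [hsplit]
    have : 1 - (x/y)^a ≤ a * (Real.log y - Real.log x) := by
      rw [hlog] at h1; nlinarith
    nlinarith
  have step2 : x ^ (-a) * (a * (Real.log y - Real.log x)) ≤ a * (Real.log y - Real.log x) := by
    have hll : 0 ≤ Real.log y - Real.log x := by
      have := Real.log_le_log hx0 hxy
      linarith
    nlinarith [mul_nonneg (mul_nonneg ha.le hll) (sub_nonneg.2 hxa)]
  have step3 : a * (Real.log y - Real.log x) ≤ a * (y - x) := by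
    have : Real.log y - Real.log x ≤ y - x := by
      have h2 : y / x - 1 ≤ y - x := by
        rw [div_sub_one (ne_of_gt hx0)]
        rw [div_le_iff₀ hx0]
        nlinarith
      linarith
    nlinarith
  linarith

lemma aux_mod (a : ℝ) (ha : 0 < a) (z w : ℂ)
    (hz : ‖z‖ ≤ 1/4) (hw : ‖w‖ ≤ 1/4) (hne : z ≠ w)
    (hle : ‖w‖ ≤ ‖z‖) :
    |(if z = 0 then 0 else (-Real.log (‖z‖ ^ 2)) ^ (-a)) -
      (if w = 0 then 0 else (-Real.log (‖w‖ ^ 2)) ^ (-a))| ≤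
      (1 + 3*a*(4*a)^a) / |Real.log (‖z - w‖)| ^ a := by
  set r := ‖z‖ with hrdef
  set s := ‖w‖ with hsdef
  set d := ‖z - w‖ with hddef
  have hd0 : 0 < d := by
    have : z - w ≠ 0 := sub_ne_zero.mpr hne
    simpa [hddef] using (norm_pos_iff.mpr this)
  have hs0' : 0 ≤ s := norm_nonneg w
  have hdle : d ≤ 1/2 := by
    have h := norm_sub_le z w
    calc d ≤ r + s := h
    _ ≤ 1/2 := by linarith
  have hr0 : 0 < r := by
    by_contra hc
    push_neg at hc
    have hr00 : r = 0 := le_antisymm hc (norm_nonneg z)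
    have hz0 : z = 0 := by rw [hrdef] at hr00; simpa using hr00
    have hs00 : s = 0 := le_antisymm (by linarith) hs0'
    have hw0 : w = 0 := by rw [hsdef] at hs00; simpa using hs00
    exact hne (hz0.trans hw0.symm)
  have hzne : z ≠ 0 := by
    intro h
    rw [hrdef, h] at hr0; simp at hr0
  have hrs : r - s ≤ d := by
    have h := norm_sub_norm_le z w
    exact h
  have hld : Real.log d < 0 := Real.log_neg hd0 (by linarith)
  set L := -Real.log d with hLdef
  have hL0 : 0 < L := by simp [hLdef]; linarith
  have hLabs : |Real.log d| = L := abs_of_neg hld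
  have hLa0 : 0 < L ^ a := Real.rpow_pos_of_pos hL0 a
  have hCpos : 0 < 3*a*(4*a)^a := by positivity
  have hexp16 : Real.exp 1 < 16 := lt_trans Real.exp_one_lt_d9 (by norm_num)
  -- 1 ≤ Xz
  have hXz1 : 1 ≤ -Real.log (r ^ 2) := by
    have hr2 : (0:ℝ) < r ^ 2 := pow_pos hr0 2
    have : Real.log (r ^ 2) ≤ -1 := by
      rw [Real.log_le_iff_le_exp hr2]
      have : Real.exp (-1) = (Real.exp 1)⁻¹ := by rw [Real.exp_neg]
      rw [this]
      have h16 : (16:ℝ)⁻¹ ≤ (Real.exp 1)⁻¹ := by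
        apply inv_anti₀ (Real.exp_pos 1) hexp16.le
      nlinarith
    linarith
  rw [if_neg hzne, hLabs]
  rcases le_or_gt (r ^ 2) d with hcase | hcase
  · -- Case 1 : r² ≤ d
    have hXzL : L ≤ -Real.log (r ^ 2) := by
      have := Real.log_le_log (pow_pos hr0 2) hcase
      rw [hLdef]; linarith
    have hφz_le : (-Real.log (r ^ 2)) ^ (-a) ≤ L ^ (-a) :=
      Real.rpow_le_rpow_of_nonpos hL0 hXzL (by linarith)
    have hφz0 : 0 < (-Real.log (r ^ 2)) ^ (-a) := Real.rpow_pos_of_pos (by linarith) _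
    have hφw_nonneg : 0 ≤ (if w = 0 then (0:ℝ) else (-Real.log (s ^ 2)) ^ (-a)) := by
      split_ifs with h
      · exact le_refl 0
      · have hs0 : 0 < s := by
          rcases hs0'.lt_or_eq with h' | h'
          · exact h'
          · exfalso
            have h2 : s = 0 := h'.symm
            rw [hsdef] at h2
            exact h (by simpa using h2)
        have : (0:ℝ) < s^2 := pow_pos hs0 2
        exact (Real.rpow_pos_of_pos (by
          have hlt : Real.log (s^2) < 0 := Real.log_neg this (by nlinarith)
          linarith) _).le
    have hφw_le : (if w = 0 then (0:ℝ) else (-Real.log (s ^ 2)) ^ (-a)) ≤ (-Real.log (r ^ 2)) ^ (-a) := by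
      split_ifs with h
      · exact hφz0.le
      · have hs0 : 0 < s := by
          rcases hs0'.lt_or_eq with h' | h'
          · exact h'
          · exfalso
            have h2 : s = 0 := h'.symm
            rw [hsdef] at h2
            exact h (by simpa using h2)
        have hXzw : -Real.log (r ^ 2) ≤ -Real.log (s ^ 2) := by
          have := Real.log_le_log (pow_pos hs0 2) (by nlinarith : s^2 ≤ r^2)
          linarith
        exact Real.rpow_le_rpow_of_nonpos (by linarith) hXzw (by linarith)
    rw [abs_of_nonneg (by linarith)]
    have hLinv : L ^ (-a) = 1 / L ^ a := by
      rw [Real.rpow_neg hL0.le, one_div]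
    calc (-Real.log (r ^ 2)) ^ (-a) - _ ≤ L ^ (-a) := by linarith
    _ = 1 / L ^ a := hLinv
    _ ≤ (1 + 3*a*(4*a)^a) / L ^ a := by
        gcongr
        linarith
  · -- Case 2 : d < r²
    have hs0 : 0 < s := by
      have hd14 : d ≤ 1/16 := by nlinarith
      nlinarith
    have hwne : w ≠ 0 := by
      intro h
      rw [hsdef, h] at hs0; simp at hs0
    rw [if_neg hwne]
    have hlogrs : Real.log r - Real.log s ≤ (r - s) / s := by
      have hq : (0:ℝ) < r / s := div_pos hr0 hs0
      have h1 := Real.log_le_sub_one_of_pos hq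
      rw [Real.log_div (ne_of_gt hr0) (ne_of_gt hs0)] at h1
      have : r / s - 1 = (r - s) / s := by field_simp
      linarith [this ▸ h1]
    have hXzw : -Real.log (r ^ 2) ≤ -Real.log (s ^ 2) := by
      have := Real.log_le_log (pow_pos hs0 2) (pow_le_pow_left₀ hs0' hle 2)
      linarith
    -- set up sqrt
    set e := Real.sqrt d with hedef
    have he0 : 0 < e := Real.sqrt_pos.mpr hd0
    have he2 : e ^ 2 = d := Real.sq_sqrt hd0.le
    have her : e < r := lt_of_pow_lt_pow_left₀ 2 hr0.le (by rw [he2]; exact hcase)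
    have he14 : e ≤ 1/4 := by linarith
    have hde : d ≤ e / 4 := by
      have hee : e ^ 2 = e * e := pow_two e
      have h5 : e * e ≤ e * (1/4) := mul_le_mul_of_nonneg_left he14 he0.le
      rw [← he2, hee]; linarith
    have hslb : (3/4) * e ≤ s := by linarith [hrs, her, hde]
    -- difference of X's
    have hXdiff : -Real.log (s ^ 2) - (-Real.log (r ^ 2)) ≤ (8/3) * e := by
      have h2 : Real.log (r ^ 2) = 2 * Real.log r := Real.log_pow r 2
      have h3 : Real.log (s ^ 2) = 2 * Real.log s := Real.log_pow s 2
      have h4 : (r - s) / s ≤ (4/3) * e := by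
        rw [div_le_iff₀ hs0]
        nlinarith [hrs, hde, hslb, he0, he2]
      rw [h2, h3]
      linarith
    have hkey := aux_key a ha hXz1 hXzw
    have habs : |(-Real.log (r ^ 2)) ^ (-a) - (-Real.log (s ^ 2)) ^ (-a)| =
        (-Real.log (r ^ 2)) ^ (-a) - (-Real.log (s ^ 2)) ^ (-a) := by
      apply abs_of_nonneg
      have := Real.rpow_le_rpow_of_nonpos (by linarith : (0:ℝ) < -Real.log (r^2)) hXzw
        (by linarith : -a ≤ 0)
      linarith
    rw [habs]
    -- main estimate : lhs ≤ a * (8/3) * e ≤ C / L^a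
    have hstep : (-Real.log (r ^ 2)) ^ (-a) - (-Real.log (s ^ 2)) ^ (-a) ≤ a * ((8/3) * e) := by
      calc _ ≤ a * (-Real.log (s ^ 2) - -Real.log (r ^ 2)) := hkey
      _ ≤ a * ((8/3) * e) := by nlinarith [hXdiff, ha.le]
    -- e * L^a ≤ (4a)^a
    have heL : e * L ^ a ≤ (4*a) ^ a := by
      have hdinv : (0:ℝ) ≤ d⁻¹ := by positivity
      have hlogle : L ≤ 4*a * (d⁻¹) ^ ((4*a)⁻¹) := by
        have h1 := Real.log_le_rpow_div hdinv (by positivity : (0:ℝ) < (4*a)⁻¹)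
        rw [Real.log_inv] at h1
        rw [hLdef]
        calc -Real.log d ≤ (d⁻¹) ^ ((4*a)⁻¹) / (4*a)⁻¹ := h1
        _ = 4*a * (d⁻¹) ^ ((4*a)⁻¹) := by
            rw [div_eq_mul_inv, inv_inv]; ring
      have hLa_le : L ^ a ≤ (4*a) ^ a * (d⁻¹) ^ ((4:ℝ)⁻¹) := by
        calc L ^ a ≤ (4*a * (d⁻¹) ^ ((4*a)⁻¹)) ^ a :=
              Real.rpow_le_rpow hL0.le hlogle ha.le
        _ = (4*a) ^ a * ((d⁻¹) ^ ((4*a)⁻¹)) ^ a :=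
              Real.mul_rpow (by positivity) (by positivity)
        _ = (4*a) ^ a * (d⁻¹) ^ ((4:ℝ)⁻¹) := by
              rw [← Real.rpow_mul hdinv]
              have hexpeq : (4*a)⁻¹ * a = (4:ℝ)⁻¹ := by
                field_simp
              rw [hexpeq]
      have hed : e * (d⁻¹) ^ ((4:ℝ)⁻¹) ≤ 1 := by
        have h6 : (d⁻¹) ^ ((4:ℝ)⁻¹) = d ^ (-(4:ℝ)⁻¹) := by
          rw [Real.inv_rpow hd0.le, ← Real.rpow_neg hd0.le]
        have h7 : e = d ^ ((2:ℝ)⁻¹) := by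
          rw [hedef, Real.sqrt_eq_rpow]; norm_num
        rw [h6, h7, ← Real.rpow_add hd0]
        have h8 : (2:ℝ)⁻¹ + -(4:ℝ)⁻¹ = (4:ℝ)⁻¹ := by norm_num
        rw [h8]
        exact Real.rpow_le_one hd0.le (by linarith) (by norm_num)
      calc e * L ^ a ≤ e * ((4*a)^a * (d⁻¹) ^ ((4:ℝ)⁻¹)) :=
            mul_le_mul_of_nonneg_left hLa_le he0.le
      _ = (4*a)^a * (e * (d⁻¹) ^ ((4:ℝ)⁻¹)) := by ring
      _ ≤ (4*a)^a * 1 := mul_le_mul_of_nonneg_left hed (by positivity)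
      _ = (4*a)^a := mul_one _
    calc (-Real.log (r ^ 2)) ^ (-a) - (-Real.log (s ^ 2)) ^ (-a) ≤ a * ((8/3) * e) := hstep
    _ ≤ (1 + 3*a*(4*a)^a) / L ^ a := by
        rw [le_div_iff₀ hLa0]
        have h8 : a*((8/3)*e)*L^a = (8/3)*a*(e*L^a) := by ring
        rw [h8]
        have h9 : (8/3)*a*(e*L^a) ≤ (8/3)*a*((4*a)^a) :=
          mul_le_mul_of_nonneg_left heL (by positivity)
        nlinarith [h9, hCpos, ha, Real.rpow_nonneg (by positivity : (0:ℝ) ≤ 4*a) a]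

lemma aux_cont (a : ℝ) (ha : 0 < a) :
    ContinuousOn (fun z : ℂ => if z = 0 then 0 else (-Real.log (‖z‖ ^ 2)) ^ (-a))
      {z : ℂ | ‖z‖ ≤ 1/2} := by
  set φ := fun z : ℂ => if z = 0 then (0:ℝ) else (-Real.log (‖z‖ ^ 2)) ^ (-a) with hφ
  intro z hz
  by_cases hz0 : z = 0
  · subst hz0
    apply ContinuousAt.continuousWithinAt
    have h2 : Tendsto (fun z : ℂ => ‖z‖ ^ 2) (𝓝[≠] (0:ℂ)) (𝓝[≠] (0:ℝ)) := by
      rw [tendsto_nhdsWithin_iff]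
      constructor
      · apply Tendsto.mono_left ?_ nhdsWithin_le_nhds
        have hc : Continuous fun z : ℂ => ‖z‖ ^ 2 :=
          continuous_norm.pow 2
        simpa using hc.tendsto 0
      · filter_upwards [self_mem_nhdsWithin] with x hx
        simp only [Set.mem_compl_iff, Set.mem_singleton_iff] at hx ⊢
        exact pow_ne_zero 2 (norm_ne_zero_iff.mpr hx)
    have h1 : Tendsto (fun z : ℂ => -Real.log (‖z‖ ^ 2)) (𝓝[≠] (0:ℂ)) atTop := by
      have h5 := Real.tendsto_log_nhdsNE_zero.comp h2
      exact tendsto_neg_atTop_iff.mpr h5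
    have h3 : Tendsto φ (𝓝[≠] (0:ℂ)) (𝓝 0) := by
      have h4 := (tendsto_rpow_neg_atTop ha).comp h1
      apply Filter.Tendsto.congr' ?_ h4
      filter_upwards [self_mem_nhdsWithin] with x hx
      simp only [Set.mem_compl_iff, Set.mem_singleton_iff] at hx
      simp [Function.comp, φ, hx]
    have hφ0 : φ 0 = 0 := if_pos rfl
    rw [ContinuousAt, hφ0, ← nhdsNE_sup_pure]
    exact tendsto_sup.mpr ⟨h3, hφ0 ▸ tendsto_pure_nhds φ 0⟩
  · apply ContinuousAt.continuousWithinAt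
    have habs0 : 0 < ‖z‖ := norm_pos_iff.mpr hz0
    have hle : ‖z‖ ≤ 1/2 := hz
    have hne0 : -Real.log (‖z‖ ^ 2) ≠ 0 := by
      have h3 : Real.log (‖z‖ ^ 2) < 0 :=
        Real.log_neg (by positivity) (by nlinarith)
      linarith
    have hc1 : ContinuousAt (fun z : ℂ => -Real.log (‖z‖ ^ 2)) z :=
      (((continuous_norm.pow 2).continuousAt).log
        (pow_ne_zero 2 (ne_of_gt habs0))).neg
    have hc3 : ContinuousAt (fun z : ℂ => (-Real.log (‖z‖ ^ 2)) ^ (-a)) z :=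
      hc1.rpow_const (Or.inl hne0)
    apply hc3.congr
    filter_upwards [eventually_ne_nhds hz0] with x hx
    simp [Function.comp, φ, hx]

lemma aux_nonholder (a : ℝ) (ha : 0 < a) :
    ∀ β ∈ Set.Ioo (0:ℝ) 1, ∀ C > 0, ∃ z w : ℂ, ‖z‖ ≤ 1/2 ∧ ‖w‖ ≤ 1/2 ∧
      |(if z = 0 then 0 else (-Real.log (‖z‖ ^ 2)) ^ (-a)) -
        (if w = 0 then 0 else (-Real.log (‖w‖ ^ 2)) ^ (-a))| >
          C * ‖z - w‖ ^ β := by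
  intro β hβ C hC
  obtain ⟨hβ0, hβ1⟩ := hβ
  have htend : Tendsto (fun x : ℝ => x ^ a * Real.exp (-β * x)) atTop (𝓝 0) :=
    tendsto_rpow_mul_exp_neg_mul_atTop_nhds_zero a β hβ0
  have hP : (0:ℝ) < (2:ℝ) ^ a := Real.rpow_pos_of_pos (by norm_num) a
  have hev : ∀ᶠ x in atTop, x ^ a * Real.exp (-β * x) < ((C+1) * 2 ^ a)⁻¹ :=
    htend.eventually_lt_const (by positivity)
  obtain ⟨x, hx1, hx⟩ := ((eventually_ge_atTop (1:ℝ)).and hev).exists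
  set t := Real.exp (-x) with htdef
  have ht0 : 0 < t := Real.exp_pos _
  refine ⟨(t : ℂ), 0, ?_, ?_, ?_⟩
  · rw [Complex.norm_real, Real.norm_eq_abs, abs_of_pos ht0]
    have h1 : t ≤ Real.exp (-1) := Real.exp_le_exp.mpr (by linarith)
    have h2 : Real.exp (-1) ≤ 1/2 := by
      rw [Real.exp_neg]
      rw [inv_le_comm₀ (Real.exp_pos 1) (by norm_num)]
      have := Real.exp_one_gt_d9
      norm_num at this ⊢
      linarith
    linarith
  · simp
  · have htne : (t : ℂ) ≠ 0 := by
      simp only [ne_eq, Complex.ofReal_eq_zero]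
      exact ne_of_gt ht0
    rw [if_neg htne, if_pos rfl, sub_zero, sub_zero]
    have habs : ‖(t : ℂ)‖ = t := by
      rw [Complex.norm_real, Real.norm_eq_abs, abs_of_pos ht0]
    rw [habs]
    have hlogt2 : -Real.log (t ^ 2) = 2 * x := by
      rw [Real.log_pow, htdef, Real.log_exp]
      push_cast
      ring
    rw [hlogt2]
    have h2x0 : (0:ℝ) < 2 * x := by linarith
    have hpos : 0 < (2*x) ^ (-a) := Real.rpow_pos_of_pos h2x0 _
    rw [abs_of_pos hpos]
    have htβ : t ^ β = Real.exp (-β * x) := by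
      rw [htdef, ← Real.exp_mul]
      ring_nf
    rw [htβ, Real.rpow_neg h2x0.le]
    have h2xa : (2*x) ^ a = 2 ^ a * x ^ a := Real.mul_rpow (by norm_num) (by linarith)
    have hxa0 : (0:ℝ) < x ^ a := Real.rpow_pos_of_pos (by linarith) a
    rw [h2xa, gt_iff_lt, ← one_div, lt_div_iff₀ (by positivity)]
    have hCC : (0:ℝ) < C * 2 ^ a := by positivity
    have key := mul_lt_mul_of_pos_left hx hCC
    have heq : C * 2 ^ a * ((C+1) * 2 ^ a)⁻¹ = C / (C+1) := by
      rw [mul_inv]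
      field_simp
    rw [heq] at key
    have hlt1 : C / (C+1) < 1 := by
      rw [div_lt_one (by linarith)]
      linarith
    have hring : C * Real.exp (-β * x) * (2 ^ a * x ^ a) =
        C * 2 ^ a * (x ^ a * Real.exp (-β * x)) := by ring
    rw [hring]
    linarith

/-- φ(z) = (-log|z|²)^{-a} (with φ(0)=0) is continuous on the disk of radius 1/2 with
logarithmic modulus of continuity of order a, but is not Hölder continuous. -/
theorem stmt_6 (a : ℝ) (ha : 0 < a) :
    ContinuousOn (fun z : ℂ => if z = 0 then 0 else (-Real.log (‖z‖ ^ 2)) ^ (-a))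
      {z : ℂ | ‖z‖ ≤ 1/2} ∧
    (∃ C > 0, ∀ z w : ℂ, ‖z‖ ≤ 1/4 → ‖w‖ ≤ 1/4 → z ≠ w →
      |(if z = 0 then 0 else (-Real.log (‖z‖ ^ 2)) ^ (-a)) -
        (if w = 0 then 0 else (-Real.log (‖w‖ ^ 2)) ^ (-a))| ≤
          C / |Real.log (‖z - w‖)| ^ a) ∧
    ∀ β ∈ Set.Ioo (0:ℝ) 1, ∀ C > 0, ∃ z w : ℂ, ‖z‖ ≤ 1/2 ∧ ‖w‖ ≤ 1/2 ∧
      |(if z = 0 then 0 else (-Real.log (‖z‖ ^ 2)) ^ (-a)) -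
        (if w = 0 then 0 else (-Real.log (‖w‖ ^ 2)) ^ (-a))| >
          C * ‖z - w‖ ^ β := by
  refine ⟨aux_cont a ha, ⟨1 + 3*a*(4*a)^a, by positivity, fun z w hz hw hne => ?_⟩,
    aux_nonholder a ha⟩
  rcases le_total (‖w‖) (‖z‖) with h | h
  · exact aux_mod a ha z w hz hw hne h
  · have hsym := aux_mod a ha w z hw hz (Ne.symm hne) h
    rw [abs_sub_comm, show ‖z - w‖ = ‖w - z‖ from
      norm_sub_rev z w]
    exact hsym
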